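/- If H is a finite-index subgroup of a finitely generated nilpotent group G, then the commutator subgroup [H,H] has finite index in the commutator subgroup [G,G]. -/

import Mathlib

open Subgroup QuotientGroup

/-- finite kernel + finite range implies finite domain. -/
lemma aux_finite_of_ker_range {G H : Type*} [Group G] [Group H] (f : G →* H)
    (h1 : Finite f.ker) (h2 : Finite f.range) : Finite G := by
  have : Finite (G ⧸ f.ker) := Finite.of_equiv _ (QuotientGroup.quotientKerEquivRange f).symm.toEquiv
  exact Finite.of_equiv _ (Subgroup.groupEquivQuotientProdSubgroup (s := f.ker)).symm

lemma aux_fin_subgroupOf {G : Type*} [Group G] {H K : Subgroup G}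
    (h : Finite ↥(H ⊓ K)) : Finite ↥(H.subgroupOf K) := by
  refine Finite.of_injective (fun x => (⟨x.1.1, ⟨x.2, x.1.2⟩⟩ : ↥(H ⊓ K))) ?_
  intro a b hab
  simp only [Subtype.mk.injEq] at hab
  exact Subtype.ext (Subtype.ext (by have h := Subtype.ext_iff.mp hab; exact h))

/-- A torsion (bounded exponent) subgroup of a f.g. commutative subgroup is finite. -/
lemma aux_finite_torsion {G : Type*} [Group G] (A T : Subgroup G) (hle : T ≤ A)
    (hA : Group.FG ↥A) (hcomm : ∀ x ∈ A, ∀ y ∈ A, Commute x y)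
    (m : ℕ) (hm : m ≠ 0) (hpow : ∀ x ∈ T, x ^ m = 1) : Finite ↥T := by
  letI : CommGroup ↥A :=
    { (inferInstance : Group ↥A) with
      mul_comm := fun a b => Subtype.ext (hcomm a.1 a.2 b.1 b.2) }
  have hfgA : Group.FG ↥A := hA
  haveI : Module.Finite ℤ (Additive ↥A) := Module.Finite.iff_addGroup_fg.mpr
    (AddGroup.fg_iff_addMonoid_fg.mpr (Monoid.fg_iff_add_fg.mp (Group.fg_iff_monoid_fg.mp hfgA)))
  haveI : IsNoetherian ℤ (Additive ↥A) := inferInstance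
  set S : Submodule ℤ (Additive ↥A) :=
    AddSubgroup.toIntSubmodule ((T.subgroupOf A).toAddSubgroup) with hS
  haveI : Module.Finite ℤ ↥S := Module.Finite.iff_fg.mpr (IsNoetherian.noetherian S)
  haveI : AddGroup.FG ↥S := Module.Finite.iff_addGroup_fg.mp inferInstance
  have hmem : ∀ x : Additive ↥A, x ∈ S ↔ Additive.toMul x ∈ T.subgroupOf A := by
    intro x
    exact Iff.rfl
  have hfinS : Finite ↥S := by
    refine AddCommGroup.finite_of_fg_torsion ↥S ?_
    intro x
    refine isOfFinAddOrder_iff_nsmul_eq_zero.mpr ⟨m, Nat.pos_of_ne_zero hm, ?_⟩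
    have hx : Additive.toMul x.1 ∈ T.subgroupOf A := (hmem x.1).mp x.2
    have hx2 : ((Additive.toMul x.1 : ↥A) : G) ^ m = 1 := hpow _ hx
    have hx3 : (Additive.toMul x.1 : ↥A) ^ m = 1 := by
      ext; push_cast; exact hx2
    apply Subtype.ext
    show m • x.1 = 0
    rw [← ofMul_toMul x.1, ← ofMul_pow, hx3, ofMul_one]
  have hT' : Finite ↥(T.subgroupOf A) := by
    refine Finite.of_injective (fun x => (⟨Additive.ofMul x.1, (hmem _).mpr x.2⟩ : ↥S)) ?_
    intro a b hab
    simp only [Subtype.mk.injEq] at hab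
    exact Subtype.ext (Additive.ofMul.injective hab)
  exact Finite.of_equiv _ (Subgroup.subgroupOfEquivOfLe hle).toEquiv

universe u

/-- Main lemma: a f.g. nilpotent group with a normal "abelian" subgroup of finite index
has finite commutator subgroup. -/
lemma aux_main : ∀ (n : ℕ) (G : Type u) [Group G] [Group.IsNilpotent G],
    Group.nilpotencyClass G ≤ n → Group.FG G → ∀ A : Subgroup G, A.Normal →
    (∀ x ∈ A, ∀ y ∈ A, Commute x y) → A.index ≠ 0 → Finite (commutator G) := by
  intro n
  induction n with
  | zero =>
    intro G _ _ hclass _ _ _ _ _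
    haveI : Subsingleton G :=
      nilpotencyClass_zero_iff_subsingleton.mp (Nat.le_zero.mp hclass)
    infer_instance
  | succ n ih =>
    intro G _ _ hclass hFG A hAnorm hAcomm hAindex
    haveI := hFG
    haveI := hAnorm
    haveI hAfi : A.FiniteIndex := ⟨hAindex⟩
    have hclassq : Group.nilpotencyClass (G ⧸ center G) ≤ n := by
      rw [nilpotencyClass_quotient_center]; omega
    have hAq : Finite (commutator (G ⧸ center G)) := by
      refine ih (G ⧸ center G) hclassq
        (Group.fg_of_surjective (QuotientGroup.mk'_surjective (center G)))
        (A.map (QuotientGroup.mk' (center G)))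
        (Subgroup.Normal.map hAnorm _ (QuotientGroup.mk'_surjective _)) ?_ ?_
      · rintro x ⟨a, ha, rfl⟩ y ⟨b, hb, rfl⟩
        exact (hAcomm a ha b hb).map (QuotientGroup.mk' (center G))
      · intro h0
        exact hAindex (Nat.eq_zero_of_zero_dvd
          (h0 ▸ Subgroup.index_map_dvd A (QuotientGroup.mk'_surjective _)))
    have hmapfin : Finite ↥((commutator G).map (QuotientGroup.mk' (center G))) := by
      have heq : (commutator G).map (QuotientGroup.mk' (center G))
          = commutator (G ⧸ center G) := by
        rw [commutator_def, Subgroup.map_commutator, commutator_def,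
          Subgroup.map_top_of_surjective _ (QuotientGroup.mk'_surjective _)]
      rw [heq]; exact hAq
    -- the central part of the commutator subgroup is finite
    letI : CommGroup ↥A :=
      { (inferInstance : Group ↥A) with
        mul_comm := fun a b => Subtype.ext (hAcomm a.1 a.2 b.1 b.2) }
    have hpow : ∀ z ∈ commutator G ⊓ center G ⊓ A, z ^ A.index = 1 := by
      intro z hz
      obtain ⟨⟨hzc, hzZ⟩, hzA⟩ := hz
      have key : ∀ (k : ℕ) (g₀ : G), g₀⁻¹ * z ^ k * g₀ ∈ A → g₀⁻¹ * z ^ k * g₀ = z ^ k := by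
        intro k g₀ _
        have hzk : z ^ k ∈ center G := Subgroup.pow_mem _ hzZ k
        rw [mul_assoc, ← Subgroup.mem_center_iff.mp hzk g₀, ← mul_assoc,
          inv_mul_cancel, one_mul]
      have h1 := MonoidHom.transfer_eq_pow (MonoidHom.id ↥A) z key
      have h2 : MonoidHom.transfer (MonoidHom.id ↥A) z = 1 :=
        Abelianization.commutator_subset_ker (MonoidHom.transfer (MonoidHom.id ↥A)) hzc
      have h3 := h1.symm.trans h2
      exact Subtype.ext_iff.mp h3
    have hTfin : Finite ↥(commutator G ⊓ center G ⊓ A) :=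
      aux_finite_torsion A (commutator G ⊓ center G ⊓ A) inf_le_right
        (Subgroup.fg_of_index_ne_zero A) hAcomm A.index hAindex hpow
    -- deduce the center-part W is finite
    have hWfin : Finite ↥(commutator G ⊓ center G) := by
      set W := commutator G ⊓ center G with hW
      have h1 : Finite ↥(A ⊓ W) := by rw [inf_comm]; exact hTfin
      have h2 : Finite ↥(A.subgroupOf W) := aux_fin_subgroupOf h1
      have h3 : (A.subgroupOf W).index ≠ 0 := fun h0 =>
        hAindex (Nat.eq_zero_of_zero_dvd (h0 ▸ Subgroup.relIndex_dvd_index_of_normal A W))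
      letI := Subgroup.fintypeOfIndexNeZero h3
      exact Finite.of_equiv _
        (Subgroup.groupEquivQuotientProdSubgroup (s := A.subgroupOf W)).symm
    -- assemble
    set f : ↥(commutator G) →* G ⧸ center G :=
      (QuotientGroup.mk' (center G)).comp (commutator G).subtype with hf
    have hker : f.ker = (center G).subgroupOf (commutator G) := by
      rw [hf, ← MonoidHom.comap_ker, QuotientGroup.ker_mk']; rfl
    have hrange : f.range = (commutator G).map (QuotientGroup.mk' (center G)) := by
      rw [hf, MonoidHom.range_comp, Subgroup.range_subtype]
    refine aux_finite_of_ker_range f ?_ ?_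
    · rw [hker]
      exact aux_fin_subgroupOf (by rw [inf_comm]; exact hWfin)
    · rw [hrange]
      exact hmapfin

theorem stmt2 {G : Type*} [Group G] [Group.IsNilpotent G] (hFG : Group.FG G)
    (H : Subgroup G) (hH : H.FiniteIndex) :
    (⁅H, H⁆ : Subgroup G).relIndex (commutator G) ≠ 0 := by
  haveI := hH
  set K := H.normalCore with hKdef
  haveI hKn : K.Normal := H.normalCore_normal
  haveI hKfi : K.FiniteIndex := inferInstance
  have hle : (⁅K, K⁆ : Subgroup G) ≤ ⁅H, H⁆ :=
    Subgroup.commutator_mono H.normalCore_le H.normalCore_le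
  have hdvd : (⁅H, H⁆ : Subgroup G).relIndex (commutator G)
      ∣ (⁅K, K⁆ : Subgroup G).relIndex (commutator G) :=
    Subgroup.relIndex_dvd_of_le_left _ hle
  intro h0
  rw [h0] at hdvd
  have hK0 : (⁅K, K⁆ : Subgroup G).relIndex (commutator G) = 0 :=
    Nat.eq_zero_of_zero_dvd hdvd
  revert hK0
  set N : Subgroup G := ⁅K, K⁆ with hNdef
  haveI hNn : N.Normal := Subgroup.commutator_normal K K
  have hfinq : Finite ↥(commutator (G ⧸ N)) := by
    refine aux_main (Group.nilpotencyClass (G ⧸ N)) (G ⧸ N) le_rfl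
      (Group.fg_of_surjective (QuotientGroup.mk'_surjective N))
      (K.map (QuotientGroup.mk' N))
      (Subgroup.Normal.map hKn _ (QuotientGroup.mk'_surjective N)) ?_ ?_
    · rintro x ⟨a, ha, rfl⟩ y ⟨b, hb, rfl⟩
      open scoped commutatorElement in
      have h1 : (QuotientGroup.mk' N) ⁅a, b⁆ = 1 :=
        (QuotientGroup.eq_one_iff _).mpr (Subgroup.commutator_mem_commutator ha hb)
      rw [map_commutatorElement] at h1
      exact commutatorElement_eq_one_iff_commute.mp h1
    · intro h0'
      exact hKfi.index_ne_zero (Nat.eq_zero_of_zero_dvd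
        (h0' ▸ Subgroup.index_map_dvd K (QuotientGroup.mk'_surjective N)))
  set f : ↥(commutator G) →* G ⧸ N :=
    (QuotientGroup.mk' N).comp (commutator G).subtype with hf
  have hker : f.ker = N.subgroupOf (commutator G) := by
    rw [hf, ← MonoidHom.comap_ker, QuotientGroup.ker_mk']; rfl
  have hrange : f.range = (commutator G).map (QuotientGroup.mk' N) := by
    rw [hf, MonoidHom.range_comp, Subgroup.range_subtype]
  have hfr : Finite ↥f.range := by
    rw [hrange]
    have heq : (commutator G).map (QuotientGroup.mk' N) = commutator (G ⧸ N) := by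
      rw [_root_.commutator_def, Subgroup.map_commutator, _root_.commutator_def,
        Subgroup.map_top_of_surjective _ (QuotientGroup.mk'_surjective N)]
    rw [heq]; exact hfinq
  have hq : Finite (↥(commutator G) ⧸ N.subgroupOf (commutator G)) := by
    rw [← hker]
    exact Finite.of_equiv _ (QuotientGroup.quotientKerEquivRange f).symm.toEquiv
  exact Subgroup.index_ne_zero_of_finite
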